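/- Let G be a finite simple graph, let f be a γ_R-function on G, and let V_i = {v ∈ V(G) : f(v) = i} for i ∈ {0,1,2}. Then the subgraph of G induced by V_1 has maximum degree at most 1. -/
import Mathlib


open SimpleGraph

/-- The closed neighbourhood `N[v]` of a vertex `v`: `v` together with its neighbours. -/
def closedNbhd {V : Type*} (G : SimpleGraph V) (v : V) : Set V :=
  insert v (G.neighborSet v)

/-- A Roman dominating function on `G`: a map into `{0,1,2}` such that every vertex with
value `0` has a neighbour with value `2`. -/
def IsRomanDominating {V : Type*} (G : SimpleGraph V) (f : V → ℕ) : Prop :=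
  (∀ v, f v ≤ 2) ∧ ∀ v, f v = 0 → ∃ u, G.Adj v u ∧ f u = 2

/-- The Roman domination number `γ_R(G)`: the minimum weight of a Roman dominating
function on `G`. -/
noncomputable def romanNumber {V : Type*} [Fintype V] (G : SimpleGraph V) : ℕ :=
  sInf {w | ∃ f : V → ℕ, IsRomanDominating G f ∧ ∑ v, f v = w}

/-- A two-neighbour packing of `G`: a set of vertices such that every closed
neighbourhood contains at most two of its members. -/
def IsTwoNbrPacking {V : Type*} (G : SimpleGraph V) (A : Set V) : Prop :=
  ∀ v, (closedNbhd G v ∩ A).ncard ≤ 2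

/-- The two-neighbour packing number `γ̄_R(G)`: the maximum size of a two-neighbour
packing of `G`. -/
noncomputable def tnpNumber {V : Type*} [Fintype V] (G : SimpleGraph V) : ℕ :=
  sSup {n | ∃ A : Set V, IsTwoNbrPacking G A ∧ A.ncard = n}

theorem maxDegree_induced_V1_le_one {V : Type*} [Fintype V] (G : SimpleGraph V)
    (f : V → ℕ) (hf : IsRomanDominating G f) (hmin : ∑ v, f v = romanNumber G) :
    ∀ v : {v : V | f v = 1},
      ((G.induce {v : V | f v = 1}).neighborSet v).ncard ≤ 1 := by
  classical
  intro v
  by_contra h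
  push_neg at h
  obtain ⟨u, w, hu, hw, huw⟩ := (Set.one_lt_ncard_iff (Set.toFinite _)).mp h
  have hadj_u : G.Adj ↑v ↑u := hu
  have hadj_w : G.Adj ↑v ↑w := hw
  have vu : (↑v : V) ≠ ↑u := hadj_u.ne
  have vw : (↑v : V) ≠ ↑w := hadj_w.ne
  have uw : (↑u : V) ≠ ↑w := fun h' => huw (Subtype.ext h')
  have hfv : f ↑v = 1 := v.2
  have hfu : f ↑u = 1 := u.2
  have hfw : f ↑w = 1 := w.2
  set g : V → ℕ := fun x => if x = ↑v then 2 else if x = ↑u then 0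
    else if x = ↑w then 0 else f x with hg
  have hg1 : IsRomanDominating G g := by
    constructor
    · intro x
      simp only [hg]
      split_ifs <;> first | omega | exact hf.1 x
    · intro x hx
      by_cases hxv : x = ↑v
      · simp [hg, hxv] at hx
      by_cases hxu : x = ↑u
      · exact ⟨↑v, by rw [hxu]; exact hadj_u.symm, by simp [hg]⟩
      by_cases hxw : x = ↑w
      · exact ⟨↑v, by rw [hxw]; exact hadj_w.symm, by simp [hg]⟩
      · have hfx : f x = 0 := by simpa [hg, hxv, hxu, hxw] using hx
        obtain ⟨y, hy, hy2⟩ := hf.2 x hfx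
        refine ⟨y, hy, ?_⟩
        have hyv : y ≠ ↑v := by rintro rfl; omega
        have hyu : y ≠ ↑u := by rintro rfl; omega
        have hyw : y ≠ ↑w := by rintro rfl; omega
        simpa [hg, hyv, hyu, hyw] using hy2
  have hs : ∑ x, g x + 1 = ∑ x, f x := by
    have key : ∀ x ∈ ({(↑v : V), ↑u, ↑w} : Finset V)ᶜ, g x = f x := by
      intro x hx
      simp only [Finset.mem_compl, Finset.mem_insert, Finset.mem_singleton, not_or] at hx
      simp [hg, hx.1, hx.2.1, hx.2.2]
    have h3 : ∑ x ∈ ({(↑v : V), ↑u, ↑w} : Finset V)ᶜ, g x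
        = ∑ x ∈ ({(↑v : V), ↑u, ↑w} : Finset V)ᶜ, f x := Finset.sum_congr rfl key
    rw [← Finset.sum_add_sum_compl {(↑v : V), ↑u, ↑w} g,
        ← Finset.sum_add_sum_compl {(↑v : V), ↑u, ↑w} f, h3]
    have h1 : ∑ x ∈ ({(↑v : V), ↑u, ↑w} : Finset V), g x = 2 := by
      rw [Finset.sum_insert (by simp [vu, vw]), Finset.sum_insert (by simp [uw]),
        Finset.sum_singleton]
      simp [hg, Ne.symm vu, Ne.symm vw, Ne.symm uw]
    have h2 : ∑ x ∈ ({(↑v : V), ↑u, ↑w} : Finset V), f x = 3 := by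
      rw [Finset.sum_insert (by simp [vu, vw]), Finset.sum_insert (by simp [uw]),
        Finset.sum_singleton]
      omega
    omega
  have hle : romanNumber G ≤ ∑ x, g x := Nat.sInf_le ⟨g, hg1, rfl⟩
  omega
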